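/- In the four-state two-player type space with Π₁={{ω₁,ω₂},{ω₃,ω₄}}, Π₂={{ω₁,ω₄},{ω₂,ω₃}}, t₁(ω₁)=t₁(ω₂)=(1/2,1/2,0,0), t₁(ω₃)=t₁(ω₄)=(0,0,1/2,1/2), t₂(ω₁)=t₂(ω₄)=(1/2,0,0,1/2), t₂(ω₂)=t₂(ω₃)=(0,1/2,1/2,0), the uniform distribution p=(1/4,1/4,1/4,1/4) lies in the convex hull of each player's types, and it is the unique such distribution. Moreover, there is no acceptable bet: there is no pair (f₁,f₂) with f₁+f₂=0, ∫ fᵢ dtᵢ(ω,·) ≥ 0 for all i and ω, and ∫ fᵢ* dtᵢ*(ω*,·) > 0 for some player i* and state ω*. -/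

import Mathlib

open Finset

noncomputable def t1Ex : Fin 4 → Fin 4 → ℝ :=
  ![![1/2, 1/2, 0, 0], ![1/2, 1/2, 0, 0], ![0, 0, 1/2, 1/2], ![0, 0, 1/2, 1/2]]

noncomputable def t2Ex : Fin 4 → Fin 4 → ℝ :=
  ![![1/2, 0, 0, 1/2], ![0, 1/2, 1/2, 0], ![0, 1/2, 1/2, 0], ![1/2, 0, 0, 1/2]]

/-- The uniform distribution on four states. -/
noncomputable def pEx : Fin 4 → ℝ := ![1/4, 1/4, 1/4, 1/4]

lemma convex_aux (i j k l : Fin 4) :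
    Convex ℝ {x : Fin 4 → ℝ | x i = x j ∧ x k = x l ∧ x i + x k = 1/2} := by
  rintro x ⟨hx1, hx2, hx3⟩ y ⟨hy1, hy2, hy3⟩ a b ha hb hab
  refine ⟨?_, ?_, ?_⟩ <;> simp only [Pi.add_apply, Pi.smul_apply, smul_eq_mul]
  · rw [hx1, hy1]
  · rw [hx2, hy2]
  · linear_combination a*hx3 + b*hy3 + (1/2)*hab

lemma t1Ex_cases (ω : Fin 4) :
    t1Ex ω = ![1/2, 1/2, 0, 0] ∨ t1Ex ω = ![0, 0, 1/2, 1/2] := by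
  fin_cases ω
  exacts [Or.inl rfl, Or.inl rfl, Or.inr rfl, Or.inr rfl]

lemma t2Ex_cases (ω : Fin 4) :
    t2Ex ω = ![1/2, 0, 0, 1/2] ∨ t2Ex ω = ![0, 1/2, 1/2, 0] := by
  fin_cases ω
  exacts [Or.inl rfl, Or.inr rfl, Or.inr rfl, Or.inl rfl]

/-- the uniform distribution is the unique distribution in the convex hull
of each player's types, and there is no acceptable bet `(f₁, f₂)`. -/
theorem stmt_12 :
    (pEx ∈ convexHull ℝ (Set.range t1Ex) ∧ pEx ∈ convexHull ℝ (Set.range t2Ex)) ∧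
    (∀ q : Fin 4 → ℝ,
      q ∈ convexHull ℝ (Set.range t1Ex) → q ∈ convexHull ℝ (Set.range t2Ex) → q = pEx) ∧
    ¬ ∃ f1 f2 : Fin 4 → ℝ,
        (∀ ω, f1 ω + f2 ω = 0) ∧
        (∀ ω, 0 ≤ ∑ a, f1 a * t1Ex ω a) ∧ (∀ ω, 0 ≤ ∑ a, f2 a * t2Ex ω a) ∧
        (∃ ω, (0 < ∑ a, f1 a * t1Ex ω a) ∨ (0 < ∑ a, f2 a * t2Ex ω a)) := by
  have r0 : t1Ex 0 = ![1/2, 1/2, 0, 0] := rfl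
  have r2 : t1Ex 2 = ![0, 0, 1/2, 1/2] := rfl
  have s0 : t2Ex 0 = ![1/2, 0, 0, 1/2] := rfl
  have s1 : t2Ex 1 = ![0, 1/2, 1/2, 0] := rfl
  refine ⟨⟨?_, ?_⟩, ?_, ?_⟩
  · have h0 : t1Ex 0 ∈ convexHull ℝ (Set.range t1Ex) :=
      subset_convexHull ℝ _ ⟨0, rfl⟩
    have h2 : t1Ex 2 ∈ convexHull ℝ (Set.range t1Ex) :=
      subset_convexHull ℝ _ ⟨2, rfl⟩
    have := (convex_convexHull ℝ (Set.range t1Ex)) h0 h2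
      (by norm_num : (0:ℝ) ≤ 1/2) (by norm_num : (0:ℝ) ≤ 1/2) (by norm_num)
    convert this using 1
    funext i
    rw [r0, r2]
    fin_cases i <;> simp [pEx] <;> norm_num
  · have h0 : t2Ex 0 ∈ convexHull ℝ (Set.range t2Ex) :=
      subset_convexHull ℝ _ ⟨0, rfl⟩
    have h2 : t2Ex 1 ∈ convexHull ℝ (Set.range t2Ex) :=
      subset_convexHull ℝ _ ⟨1, rfl⟩
    have := (convex_convexHull ℝ (Set.range t2Ex)) h0 h2
      (by norm_num : (0:ℝ) ≤ 1/2) (by norm_num : (0:ℝ) ≤ 1/2) (by norm_num)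
    convert this using 1
    funext i
    rw [s0, s1]
    fin_cases i <;> simp [pEx] <;> norm_num
  · intro q hq1 hq2
    have hs1 : convexHull ℝ (Set.range t1Ex) ⊆
        {x : Fin 4 → ℝ | x 0 = x 1 ∧ x 2 = x 3 ∧ x 0 + x 2 = 1/2} := by
      apply convexHull_min _ (convex_aux 0 1 2 3)
      rintro _ ⟨i, rfl⟩
      rcases t1Ex_cases i with h | h <;> rw [Set.mem_setOf_eq, h] <;> norm_num [Matrix.cons_val_two, Matrix.cons_val_three, Matrix.vecHead, Matrix.vecTail]
    have hs2 : convexHull ℝ (Set.range t2Ex) ⊆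
        {x : Fin 4 → ℝ | x 0 = x 3 ∧ x 1 = x 2 ∧ x 0 + x 1 = 1/2} := by
      apply convexHull_min _ (convex_aux 0 3 1 2)
      rintro _ ⟨i, rfl⟩
      rcases t2Ex_cases i with h | h <;> rw [Set.mem_setOf_eq, h] <;> norm_num [Matrix.cons_val_two, Matrix.cons_val_three, Matrix.vecHead, Matrix.vecTail]
    obtain ⟨a1, a2, a3⟩ := hs1 hq1
    obtain ⟨b1, b2, b3⟩ := hs2 hq2
    funext i
    fin_cases i <;> simp [pEx] <;> norm_num <;> linarith
  · rintro ⟨f1, f2, hsum, h1, h2, ω, hpos⟩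
    have e0 := h1 0
    have e2 := h1 2
    have g0 := h2 0
    have g1 := h2 1
    rw [r0, Fin.sum_univ_four] at e0
    rw [r2, Fin.sum_univ_four] at e2
    rw [s0, Fin.sum_univ_four] at g0
    rw [s1, Fin.sum_univ_four] at g1
    norm_num [Matrix.cons_val_two, Matrix.cons_val_three, Matrix.vecHead, Matrix.vecTail] at e0 e2 g0 g1
    have hf0 := hsum 0
    have hf1 := hsum 1
    have hf2 := hsum 2
    have hf3 := hsum 3
    rcases hpos with hp | hp
    · rcases t1Ex_cases ω with h | h <;> rw [h, Fin.sum_univ_four] at hp <;>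
        norm_num [Matrix.cons_val_two, Matrix.cons_val_three, Matrix.vecHead, Matrix.vecTail] at hp <;> linarith
    · rcases t2Ex_cases ω with h | h <;> rw [h, Fin.sum_univ_four] at hp <;>
        norm_num [Matrix.cons_val_two, Matrix.cons_val_three, Matrix.vecHead, Matrix.vecTail] at hp <;> linarith
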